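/- Combining the feature-reconstruction identity with the ball-volume bound: if x is protected by a passport s_β drawn uniformly from (-N,0)ᵐ (with W_p an invertible m×m matrix), the probability that an adversary, guessing a fixed passport s_β' and computing x̂ = W_p⁻¹(H - W_p s_β'), achieves ‖x - x̂‖₂ ≤ ε is at most π^{m/2} ε^m / (Γ(1 + m/2) N^m). -/

import Mathlib

open MeasureTheory Real

/-- combining the reconstruction identity with the ball-volume bound,
the probability (over a passport drawn uniformly from `(-N,0)^m`) that the
adversary's reconstruction `x̂ = Wp⁻¹ (H - Wp sβ')` is within `ε` of `x`
(where `H = Wp x + Wp sβ`) is at most `π^(m/2) ε^m / (Γ(1+m/2) N^m)`. -/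
theorem fedpass_feature_recovery_prob_le
    (m : ℕ) (hm : 0 < m) (N ε : ℝ) (hN : 0 < N) (hε : 0 < ε)
    (Wp : Matrix (Fin m) (Fin m) ℝ) (hW : IsUnit Wp.det)
    (x : EuclideanSpace ℝ (Fin m)) (sβ' : EuclideanSpace ℝ (Fin m))
    (cube : Set (EuclideanSpace ℝ (Fin m)))
    (hcube : cube = {s | ∀ j, s j ∈ Set.Ioo (-N) 0})
    (H : EuclideanSpace ℝ (Fin m) → Fin m → ℝ)
    (hH : ∀ sβ, H sβ = Wp.mulVec ((WithLp.equiv 2 (Fin m → ℝ)) x) +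
        Wp.mulVec ((WithLp.equiv 2 (Fin m → ℝ)) sβ))
    (xhat : EuclideanSpace ℝ (Fin m) → EuclideanSpace ℝ (Fin m))
    (hxhat : ∀ sβ, xhat sβ = (WithLp.equiv 2 (Fin m → ℝ)).symm
        (Wp⁻¹.mulVec (H sβ - Wp.mulVec ((WithLp.equiv 2 (Fin m → ℝ)) sβ')))) :
    volume ({sβ : EuclideanSpace ℝ (Fin m) | ‖x - xhat sβ‖ ≤ ε} ∩ cube) / volume cube ≤
      ENNReal.ofReal (π ^ ((m : ℝ) / 2) * ε ^ m / (Real.Gamma (1 + (m : ℝ) / 2) * N ^ m)) := by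
  haveI : Nonempty (Fin m) := ⟨⟨0, hm⟩⟩
  have hrec : ∀ sβ, xhat sβ = x + (sβ - sβ') := by
    intro sβ
    rw [hxhat, hH]
    have h1 : Wp.mulVec ((WithLp.equiv 2 (Fin m → ℝ)) x) +
        Wp.mulVec ((WithLp.equiv 2 (Fin m → ℝ)) sβ) -
        Wp.mulVec ((WithLp.equiv 2 (Fin m → ℝ)) sβ') =
        Wp.mulVec ((WithLp.equiv 2 (Fin m → ℝ)) x +
          ((WithLp.equiv 2 (Fin m → ℝ)) sβ - (WithLp.equiv 2 (Fin m → ℝ)) sβ')) := by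
      rw [Matrix.mulVec_add, Matrix.mulVec_sub]; ring
    rw [h1, Matrix.mulVec_mulVec, Matrix.nonsing_inv_mul _ hW, Matrix.one_mulVec]
    apply (WithLp.equiv 2 (Fin m → ℝ)).symm_apply_eq.mpr
    rfl
  have hset : {sβ : EuclideanSpace ℝ (Fin m) | ‖x - xhat sβ‖ ≤ ε} =
      Metric.closedBall sβ' ε := by
    ext sβ
    simp only [Set.mem_setOf_eq, Metric.mem_closedBall, dist_eq_norm, hrec]
    have h2 : x - (x + (sβ - sβ')) = -(sβ - sβ') := by abel
    rw [h2, norm_neg]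
  have hcvol : volume cube = ENNReal.ofReal N ^ m := by
    rw [hcube]
    have h3 : {s : EuclideanSpace ℝ (Fin m) | ∀ j, s j ∈ Set.Ioo (-N) 0} =
        (MeasurableEquiv.toLp 2 (Fin m → ℝ)).symm ⁻¹'
          (Set.univ.pi fun _ => Set.Ioo (-N) 0) := by
      ext s; simp [Set.mem_pi]
    rw [h3, (EuclideanSpace.volume_preserving_symm_measurableEquiv_toLp (Fin m)).measure_preimage
      (MeasurableSet.univ_pi fun _ => measurableSet_Ioo).nullMeasurableSet,
      volume_pi_pi]
    simp [Real.volume_Ioo]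
  have hcube0 : volume cube ≠ 0 := by
    rw [hcvol]
    exact pow_ne_zero _ (by simp [hN])
  have hcubet : volume cube ≠ ⊤ := by
    rw [hcvol]; exact ENNReal.pow_ne_top ENNReal.ofReal_ne_top
  rw [ENNReal.div_le_iff hcube0 hcubet, hcvol]
  calc volume ({sβ : EuclideanSpace ℝ (Fin m) | ‖x - xhat sβ‖ ≤ ε} ∩ cube)
      ≤ volume (Metric.closedBall sβ' ε) := by
        rw [hset]; exact measure_mono Set.inter_subset_left
    _ = (ENNReal.ofReal ε) ^ m *
        ENNReal.ofReal (Real.sqrt π ^ m / Real.Gamma (m / 2 + 1)) := by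
        rw [EuclideanSpace.volume_closedBall]; simp
    _ ≤ ENNReal.ofReal (π ^ ((m : ℝ) / 2) * ε ^ m / (Real.Gamma (1 + (m : ℝ) / 2) * N ^ m)) *
        ENNReal.ofReal N ^ m := by
        rw [← ENNReal.ofReal_pow hε.le, ← ENNReal.ofReal_pow hN.le,
          ← ENNReal.ofReal_mul (by positivity), ← ENNReal.ofReal_mul (by positivity)]
        apply ENNReal.ofReal_le_ofReal
        have hΓ : 0 < Real.Gamma (1 + (m : ℝ) / 2) := Real.Gamma_pos_of_pos (by positivity)
        have hsq : Real.sqrt π ^ m = π ^ ((m : ℝ) / 2) := by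
          rw [Real.sqrt_eq_rpow, ← Real.rpow_natCast (π ^ (1/2 : ℝ)) m,
            ← Real.rpow_mul pi_pos.le]
          ring_nf
        rw [hsq, add_comm ((m : ℝ)/2) 1]
        apply le_of_eq
        field_simp
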